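/- Telescoping reduction of the bottom-up queue-jumping model at zero noise: let r be a strict partial order on a finite type A with |A| = m ≥ 1 and let Y : Fin m ≃ A be an enumeration. Then ∏_{j=1}^{m} C̃_{Y_j}(r[{Y_1, …, Y_j}]) / C(r[{Y_1, …, Y_j}]) equals 1/C(r) if Y is a linear extension of r, and equals 0 otherwise, where C̃_a denotes the count of linear extensions ending with a and r[{Y_1, …, Y_j}] is the suborder of r on the prefix set {Y_1, …, Y_j}. -/

import Mathlib

open scoped Classical

/-- `Y` is a linear extension of `r`: for positions `i < j`, the later element is never
above the earlier one. -/
def IsLinExt {A : Type*} {n : ℕ} (r : A → A → Prop) (Y : Fin n ≃ A) : Prop :=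
  ∀ i j : Fin n, i < j → ¬ r (Y j) (Y i)

/-- `C(r)`: the number of linear extensions of `r`. -/
noncomputable def numExt {A : Type*} [Fintype A] (r : A → A → Prop) : ℕ :=
  Nat.card {Y : Fin (Fintype.card A) ≃ A // IsLinExt r Y}

/-- `C̃_a(r)`: the number of linear extensions of `r` whose last entry is `a`. -/
noncomputable def numExtLast {A : Type*} [Fintype A] (r : A → A → Prop) (a : A) : ℕ :=
  Nat.card {Y : Fin (Fintype.card A) ≃ A //
    IsLinExt r Y ∧ ∀ i : Fin (Fintype.card A), (i : ℕ) = Fintype.card A - 1 → Y i = a}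

/-- The suborder `r[O]`: the restriction of `r` to the subset `O`. -/
def subrel {A : Type*} (r : A → A → Prop) (O : Set A) : O → O → Prop :=
  fun x y => r (x : A) (y : A)

section Aux

variable {A : Type*}

lemma numExt_eq_card [Fintype A] (r : A → A → Prop) {k : ℕ} (h : Fintype.card A = k) :
    numExt r = Nat.card {Y : Fin k ≃ A // IsLinExt r Y} := by
  subst h; rfl

lemma numExtLast_eq_card [Fintype A] (r : A → A → Prop) (a : A) {k : ℕ}
    (h : Fintype.card A = k) :
    numExtLast r a = Nat.card {Y : Fin k ≃ A //
      IsLinExt r Y ∧ ∀ i : Fin k, (i : ℕ) = k - 1 → Y i = a} := by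
  subst h; rfl

lemma exists_linExt [Fintype A] (r : A → A → Prop) (hirr : Irreflexive r)
    (htrans : Transitive r) : ∃ Y : Fin (Fintype.card A) ≃ A, IsLinExt r Y := by
  classical
  set q : A → A → Prop := fun a b => a = b ∨ r a b with hq
  haveI hpo : IsPartialOrder A q :=
    { refl := fun a => Or.inl rfl
      trans := by
        rintro a b c (rfl | hab) hbc
        · exact hbc
        rcases hbc with rfl | hbc
        · exact Or.inr hab
        · exact Or.inr (htrans hab hbc)
      antisymm := by
        rintro a b (rfl | hab) hba
        · rfl
        rcases hba with rfl | hba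
        · rfl
        · exact absurd (htrans hab hba) (hirr a) }
  obtain ⟨s, hs, hqs⟩ := extend_partialOrder q
  haveI := hs
  haveI : IsTrans A s := inferInstance
  haveI : IsAntisymm A s := inferInstance
  haveI : IsTotal A s := inferInstance
  set l : List A := Finset.univ.sort s with hl
  have hnd : l.Nodup := Finset.sort_nodup _ s
  have hmem : ∀ x : A, x ∈ l := fun x => (Finset.mem_sort (r := s)).2 (Finset.mem_univ x)
  have hlen : l.length = Fintype.card A := by
    rw [hl, Finset.length_sort, Finset.card_univ]
  have hsorted : l.Pairwise s := Finset.pairwise_sort _ s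
  refine ⟨(finCongr hlen.symm).trans (List.Nodup.getEquivOfForallMemList l hnd hmem), ?_⟩
  intro i j hij hr
  let i' : Fin l.length := finCongr hlen.symm i
  let j' : Fin l.length := finCongr hlen.symm j
  have hij' : i' < j' := by
    rw [Fin.lt_def]
    show (i : ℕ) < (j : ℕ)
    exact hij
  have hsij : s (l.get i') (l.get j') := hsorted.rel_get_of_lt hij'
  have hsji : s (l.get j') (l.get i') := hqs _ _ (Or.inr hr)
  have heq : l.get j' = l.get i' := antisymm hsji hsij
  have : j' = i' := List.nodup_iff_injective_get.mp hnd heq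
  exact absurd this (ne_of_gt hij')


lemma one_le_numExt [Fintype A] (r : A → A → Prop) (hirr : Irreflexive r)
    (htrans : Transitive r) : 1 ≤ numExt r := by
  obtain ⟨Y, hY⟩ := exists_linExt r hirr htrans
  haveI : Nonempty {Y : Fin (Fintype.card A) ≃ A // IsLinExt r Y} := ⟨⟨Y, hY⟩⟩
  exact Nat.card_pos

lemma numExt_congr {B : Type*} [Fintype A] [Fintype B] (e : A ≃ B) (r : A → A → Prop)
    (r' : B → B → Prop) (h : ∀ x y : A, r x y ↔ r' (e x) (e y)) :
    numExt r' = numExt r := by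
  have hc : Fintype.card B = Fintype.card A := Fintype.card_congr e.symm
  rw [numExt_eq_card r' hc, numExt]
  refine Nat.card_congr (Equiv.subtypeEquiv
    (Equiv.equivCongr (Equiv.refl (Fin (Fintype.card A))) e.symm) fun Z => ?_)
  constructor
  · intro hZ i j hij hrr
    have hrr' : r (e.symm (Z j)) (e.symm (Z i)) := hrr
    have := (h _ _).mp hrr'
    rw [e.apply_symm_apply, e.apply_symm_apply] at this
    exact hZ i j hij this
  · intro hZ i j hij hrr
    refine hZ i j hij ?_
    show r (e.symm (Z j)) (e.symm (Z i))
    refine (h (e.symm (Z j)) (e.symm (Z i))).mpr ?_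
    rw [e.apply_symm_apply, e.apply_symm_apply]
    exact hrr

lemma numExtLast_eq_zero [Fintype A] (r : A → A → Prop) (hirr : Irreflexive r)
    {a b : A} (hab : r a b) : numExtLast r a = 0 := by
  haveI : IsEmpty {Y : Fin (Fintype.card A) ≃ A //
      IsLinExt r Y ∧ ∀ i : Fin (Fintype.card A), (i : ℕ) = Fintype.card A - 1 → Y i = a} := by
    constructor
    rintro ⟨Y, hlin, hlast⟩
    have hpos : 0 < Fintype.card A := Fintype.card_pos_iff.2 ⟨a⟩
    let L : Fin (Fintype.card A) := ⟨Fintype.card A - 1, by omega⟩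
    have hYL : Y L = a := hlast L rfl
    have hba : b ≠ a := fun h => hirr a (h ▸ hab)
    have hiL : Y.symm b ≠ L := fun h => hba (by rw [← Y.apply_symm_apply b, h, hYL])
    have hlt : Y.symm b < L := by
      rw [Fin.lt_def]
      have h1 : ((Y.symm b : Fin (Fintype.card A)) : ℕ) < Fintype.card A := (Y.symm b).isLt
      have h2 : ((Y.symm b : Fin (Fintype.card A)) : ℕ) ≠ Fintype.card A - 1 :=
        fun h => hiL (Fin.ext h)
      show ((Y.symm b : Fin (Fintype.card A)) : ℕ) < Fintype.card A - 1
      omega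
    exact hlin _ L hlt (by rw [hYL, Y.apply_symm_apply]; exact hab)
  rw [numExtLast]
  exact Nat.card_of_isEmpty

lemma numExt_of_card_zero [Fintype A] (h : Fintype.card A = 0) (r : A → A → Prop) :
    numExt r = 1 := by
  haveI : IsEmpty A := Fintype.card_eq_zero_iff.mp h
  rw [numExt_eq_card r h]
  rw [Nat.card_eq_one_iff_unique]
  constructor
  · constructor
    rintro ⟨Y1, _⟩ ⟨Y2, _⟩
    exact Subtype.ext (Equiv.ext fun i => i.elim0)
  · exact ⟨⟨Equiv.equivOfIsEmpty (Fin 0) A, fun i => i.elim0⟩⟩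

lemma numExtLast_min [Fintype A] [DecidableEq A] {n : ℕ} (hA : Fintype.card A = n + 1)
    (r : A → A → Prop) (a : A) (hmin : ∀ b, ¬ r a b) :
    numExtLast r a = numExt (subrel r {y : A | y ≠ a}) := by
  have hS : Fintype.card {y : A | y ≠ a} = n := by
    have h1 : Fintype.card {y : A // y = a} = 1 := Fintype.card_subtype_eq a
    have h2 : Fintype.card {y : A // ¬ y = a} = Fintype.card A - Fintype.card {y : A // y = a} :=
      Fintype.card_subtype_compl _
    have h3 : Fintype.card ↥{y : A | y ≠ a} = Fintype.card {y : A // ¬ y = a} :=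
      Fintype.card_congr (Equiv.subtypeEquivRight fun y => Iff.rfl)
    omega
  rw [numExtLast_eq_card r a hA, numExt_eq_card _ hS]
  apply Nat.card_congr
  -- master equiv on "last entry is a" equivs
  let F : {Y : Fin (n + 1) ≃ A // Y (Fin.last n) = a} ≃ {e : Option (Fin n) ≃ A // e none = a} :=
    { toFun := fun Y => ⟨finSuccEquivLast.symm.trans Y.1, by simp [Y.2]⟩
      invFun := fun e => ⟨finSuccEquivLast.trans e.1, by simp [e.2]⟩
      left_inv := fun Y => by
        apply Subtype.ext; apply Equiv.ext; intro i; simp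
      right_inv := fun e => by
        apply Subtype.ext; apply Equiv.ext; intro i; simp }
  let N : {Y : Fin (n + 1) ≃ A // Y (Fin.last n) = a} ≃ (Fin n ≃ {y : A // y ≠ a}) :=
    F.trans (Equiv.optionSubtype a)
  have hNapp : ∀ (Y : {Y : Fin (n + 1) ≃ A // Y (Fin.last n) = a}) (i : Fin n),
      ((N Y i : A)) = Y.1 (Fin.castSucc i) := by
    intro Y i
    show ((finSuccEquivLast.symm.trans Y.1) (some i) : A) = Y.1 (Fin.castSucc i)
    simp
  have hlastiff : ∀ Y : Fin (n + 1) ≃ A,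
      (IsLinExt r Y ∧ ∀ i : Fin (n + 1), (i : ℕ) = (n + 1) - 1 → Y i = a) ↔
        (Y (Fin.last n) = a ∧ IsLinExt r Y) := by
    intro Y
    constructor
    · rintro ⟨h1, h2⟩; exact ⟨h2 _ rfl, h1⟩
    · rintro ⟨h1, h2⟩
      refine ⟨h2, fun i hi => ?_⟩
      have : i = Fin.last n := Fin.ext (by simpa using hi)
      rw [this]; exact h1
  refine (Equiv.subtypeEquivRight hlastiff).trans
    (((Equiv.subtypeSubtypeEquivSubtypeInter
        (fun Y : Fin (n + 1) ≃ A => Y (Fin.last n) = a) (IsLinExt r)).symm).trans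
      (N.subtypeEquiv fun Y => ?_))
  constructor
  · intro h i j hij
    show ¬ r ((N Y) j : A) ((N Y) i : A)
    rw [hNapp, hNapp]
    exact h _ _ (Fin.castSucc_lt_castSucc_iff.mpr hij)
  · intro h i j hij
    by_cases hj : j = Fin.last n
    · subst hj
      rw [Y.2]
      exact hmin _
    · have hj' : j < Fin.last n := lt_of_le_of_ne (Fin.le_last j) hj
      have hi : i ≠ Fin.last n := ne_of_lt (hij.trans hj')
      have hc := h (i.castPred hi) (j.castPred hj)
        (by rw [Fin.lt_def, Fin.coe_castPred, Fin.coe_castPred]; exact hij)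
      show ¬ r (Y.1 j) (Y.1 i)
      have e1 : ((N Y) (j.castPred hj) : A) = Y.1 j := by
        rw [hNapp, Fin.castSucc_castPred]
      have e2 : ((N Y) (i.castPred hi) : A) = Y.1 i := by
        rw [hNapp, Fin.castSucc_castPred]
      rw [← e1, ← e2]
      exact hc

lemma prod_div_telescope (G : ℕ → ℕ) (hG : ∀ k, 1 ≤ G k) (m : ℕ) :
    ∏ k ∈ Finset.range m, ((G k : ℝ) / (G (k + 1) : ℝ)) = (G 0 : ℝ) / (G m : ℝ) := by
  induction m with
  | zero =>
    have h0 : (G 0 : ℝ) ≠ 0 := by have := hG 0; positivity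
    simp [div_self h0]
  | succ m ih =>
    rw [Finset.prod_range_succ, ih]
    have h1 : (G m : ℝ) ≠ 0 := by
      have := hG m; positivity
    rw [div_mul_div_comm, mul_comm ((G 0 : ℝ))]
    exact mul_div_mul_left _ _ h1

end Aux

/-- Telescoping reduction of the bottom-up queue-jumping model at zero noise: the product
of the prefix-suborder ratios (using last-entry counts) equals `1/C(r)` when `Y` is a
linear extension of `r`, and `0` otherwise. -/
theorem stmt9 {A : Type*} [Fintype A] [DecidableEq A] (m : ℕ) (hm : 1 ≤ m)
    (hcard : Fintype.card A = m)
    (r : A → A → Prop) (hirr : Irreflexive r) (htrans : Transitive r)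
    (Y : Fin m ≃ A) :
    (∏ j : Fin m,
      ((numExtLast (subrel r {a : A | ∃ i : Fin m, i ≤ j ∧ Y i = a})
          ⟨Y j, ⟨j, le_refl j, rfl⟩⟩ : ℕ) : ℝ) /
        ((numExt (subrel r {a : A | ∃ i : Fin m, i ≤ j ∧ Y i = a}) : ℕ) : ℝ)) =
      if IsLinExt r Y then 1 / ((numExt r : ℕ) : ℝ) else 0 := by
  classical
  let P : Fin m → Set A := fun j => {a : A | ∃ i : Fin m, i ≤ j ∧ Y i = a}
  let aj : (j : Fin m) → ↥(P j) := fun j => ⟨Y j, ⟨j, le_refl j, rfl⟩⟩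
  show (∏ j : Fin m,
      ((numExtLast (subrel r (P j)) (aj j) : ℕ) : ℝ) /
        ((numExt (subrel r (P j)) : ℕ) : ℝ)) =
      if IsLinExt r Y then 1 / ((numExt r : ℕ) : ℝ) else 0
  have hirr' : ∀ j, Irreflexive (subrel r (P j)) := fun j x => hirr ↑x
  have htr' : ∀ j, Transitive (subrel r (P j)) := fun _ x y z hxy hyz => htrans hxy hyz
  -- cardinality of the prefix sets
  have hcardP : ∀ j : Fin m, Fintype.card ↥(P j) = (j : ℕ) + 1 := by
    intro j
    have hjm : (j : ℕ) < m := j.isLt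
    let f : Fin ((j : ℕ) + 1) → ↥(P j) := fun k =>
      ⟨Y ⟨(k : ℕ), by omega⟩, ⟨⟨(k : ℕ), by omega⟩, by
        rw [Fin.le_def]
        exact Nat.lt_succ_iff.mp k.isLt, rfl⟩⟩
    have hbij : Function.Bijective f := by
      constructor
      · intro k1 k2 hk
        have h1 : Y ⟨(k1 : ℕ), by omega⟩ = Y ⟨(k2 : ℕ), by omega⟩ := congrArg Subtype.val hk
        have h2 := Y.injective h1
        have h3 := congrArg Fin.val h2
        exact Fin.ext h3
      · rintro ⟨x, hx⟩
        obtain ⟨i, hij, rfl⟩ := hx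
        rw [Fin.le_def] at hij
        refine ⟨⟨(i : ℕ), by omega⟩, ?_⟩
        apply Subtype.ext
        show Y ⟨(i : ℕ), _⟩ = Y i
        exact congrArg Y (Fin.ext rfl)
    have := Fintype.card_congr (Equiv.ofBijective f hbij)
    simpa using this.symm
  -- the telescoping sequence
  let G : ℕ → ℕ := fun k => match k with
    | 0 => 1
    | (k' + 1) => if h : k' < m then numExt (subrel r (P ⟨k', h⟩)) else 1
  have hGpos : ∀ k, 1 ≤ G k := by
    intro k
    cases k with
    | zero => exact le_refl 1
    | succ k' =>
      by_cases h : k' < m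
      · have h1 : G (k' + 1) = numExt (subrel r (P ⟨k', h⟩)) := dif_pos h
        rw [h1]
        exact one_le_numExt _ (hirr' _) (htr' _)
      · have h1 : G (k' + 1) = 1 := dif_neg h
        rw [h1]
  have hden : ∀ j : Fin m, numExt (subrel r (P j)) = G ((j : ℕ) + 1) := by
    intro j
    have h1 : G ((j : ℕ) + 1) = numExt (subrel r (P ⟨(j : ℕ), j.isLt⟩)) := dif_pos j.isLt
    exact h1.symm
  -- value of G at m
  have hm1 : m - 1 < m := by omega
  have hful : ∀ a : A, a ∈ P ⟨m - 1, hm1⟩ := by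
    intro a
    refine ⟨Y.symm a, ?_, Y.apply_symm_apply a⟩
    rw [Fin.le_def]
    have := (Y.symm a).isLt
    show ((Y.symm a : Fin m) : ℕ) ≤ m - 1
    omega
  have hGm : G m = numExt r := by
    let ffin : A → ↥(P ⟨m - 1, hm1⟩) := fun a => ⟨a, hful a⟩
    have hbij : Function.Bijective ffin :=
      ⟨fun x y h => congrArg Subtype.val h, fun x => ⟨↑x, Subtype.ext rfl⟩⟩
    have hfin := numExt_congr (Equiv.ofBijective ffin hbij) r
      (subrel r (P ⟨m - 1, hm1⟩)) (fun x y => Iff.rfl)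
    have hmm2 : m = (m - 1) + 1 := by omega
    have h2 : G m = G ((m - 1) + 1) := congrArg G hmm2
    have h3 : G ((m - 1) + 1) = numExt (subrel r (P ⟨m - 1, hm1⟩)) := dif_pos hm1
    rw [h2, h3, hfin]
  by_cases hlin : IsLinExt r Y
  · -- the numerators telescope
    rw [if_pos hlin]
    have hnum : ∀ j : Fin m, numExtLast (subrel r (P j)) (aj j) = G (j : ℕ) := by
      intro j
      have hmin : ∀ b : ↥(P j), ¬ subrel r (P j) (aj j) b := by
        rintro ⟨x, hx⟩ hr
        obtain ⟨i, hij, rfl⟩ := hx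
        rcases eq_or_lt_of_le hij with rfl | hlt₂
        · exact hirr _ hr
        · exact hlin i j hlt₂ hr
      have h1 : numExtLast (subrel r (P j)) (aj j) =
          numExt (subrel (subrel r (P j)) {y : ↥(P j) | y ≠ aj j}) :=
        numExtLast_min (hcardP j) _ _ hmin
      rcases hjv : (j : ℕ) with _ | k
      · rw [h1]
        apply numExt_of_card_zero
        haveI hsub : Subsingleton ↥(P j) := by
          have hc1 := hcardP j
          rw [hjv] at hc1
          exact Fintype.card_le_one_iff_subsingleton.mp (by omega)
        exact Fintype.card_eq_zero_iff.mpr ⟨fun y => y.2 (Subsingleton.elim _ _)⟩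
      · have hk : k < m := by have := j.isLt; omega
        have hmem1 : ∀ x : ↥(P ⟨k, hk⟩), (x : A) ∈ P j := by
          rintro ⟨x, ⟨i, hij', rfl⟩⟩
          refine ⟨i, ?_, rfl⟩
          rw [Fin.le_def] at hij' ⊢
          have hcoe : ((⟨k, hk⟩ : Fin m) : ℕ) = k := rfl
          rw [hcoe] at hij'
          show (i : ℕ) ≤ (j : ℕ)
          omega
        have hne1 : ∀ x : ↥(P ⟨k, hk⟩), (⟨(x : A), hmem1 x⟩ : ↥(P j)) ≠ aj j := by
          rintro ⟨x, ⟨i, hij', rfl⟩⟩ hEq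
          have h4 : Y i = Y j := congrArg Subtype.val hEq
          have h5 : i = j := Y.injective h4
          rw [Fin.le_def] at hij'
          rw [h5] at hij'
          have hcoe : ((⟨k, hk⟩ : Fin m) : ℕ) = k := rfl
          rw [hcoe] at hij'
          omega
        let f : ↥(P ⟨k, hk⟩) → ↥{y : ↥(P j) | y ≠ aj j} := fun x => ⟨⟨↑x, hmem1 x⟩, hne1 x⟩
        have hfbij : Function.Bijective f := by
          constructor
          · intro x y hxy
            exact Subtype.ext
              (congrArg (fun z : ↥{y : ↥(P j) | y ≠ aj j} => ((z : ↥(P j)) : A)) hxy)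
          · rintro ⟨⟨x, hx⟩, hne⟩
            obtain ⟨i, hij, rfl⟩ := hx
            have hij3 : i ≠ j := by
              rintro rfl
              exact hne (Subtype.ext rfl)
            have hile : (i : ℕ) ≤ k := by
              rw [Fin.le_def] at hij
              have h6 : (i : ℕ) ≠ (j : ℕ) := fun h => hij3 (Fin.ext h)
              omega
            refine ⟨⟨Y i, ⟨i, ?_, rfl⟩⟩, ?_⟩
            · rw [Fin.le_def]
              exact hile
            · apply Subtype.ext
              apply Subtype.ext
              rfl
        have h2 := numExt_congr (Equiv.ofBijective f hfbij) (subrel r (P ⟨k, hk⟩))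
          (subrel (subrel r (P j)) {y : ↥(P j) | y ≠ aj j}) (fun x y => Iff.rfl)
        have h7 : G (k + 1) = numExt (subrel r (P ⟨k, hk⟩)) := dif_pos hk
        rw [h1, h2]
        exact h7.symm
    have hfac : ∀ j : Fin m,
        ((numExtLast (subrel r (P j)) (aj j) : ℕ) : ℝ) /
          ((numExt (subrel r (P j)) : ℕ) : ℝ) =
        (G (j : ℕ) : ℝ) / (G ((j : ℕ) + 1) : ℝ) := by
      intro j
      rw [hnum j, hden j]
    calc (∏ j : Fin m,
        ((numExtLast (subrel r (P j)) (aj j) : ℕ) : ℝ) /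
          ((numExt (subrel r (P j)) : ℕ) : ℝ))
        = ∏ j : Fin m, (G (j : ℕ) : ℝ) / (G ((j : ℕ) + 1) : ℝ) :=
          Finset.prod_congr rfl (fun j _ => hfac j)
      _ = ∏ k ∈ Finset.range m, (G k : ℝ) / (G (k + 1) : ℝ) :=
          Fin.prod_univ_eq_prod_range (fun k => (G k : ℝ) / (G (k + 1) : ℝ)) m
      _ = (G 0 : ℝ) / (G m : ℝ) := prod_div_telescope G hGpos m
      _ = 1 / ((numExt r : ℕ) : ℝ) := by
          rw [hGm]
          norm_num
  · rw [if_neg hlin]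
    unfold IsLinExt at hlin
    push_neg at hlin
    obtain ⟨i, j, hij, hr⟩ := hlin
    refine Finset.prod_eq_zero (Finset.mem_univ j) ?_
    have hz : numExtLast (subrel r (P j)) (aj j) = 0 :=
      numExtLast_eq_zero _ (hirr' j) (b := ⟨Y i, ⟨i, le_of_lt hij, rfl⟩⟩) hr
    rw [hz]
    simp
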